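/- Apply the dqd transform (shift 0) to positive arrays {q_k, e_k} coming from a positive upper bidiagonal matrix B (q_k = a_k², e_k = b_k²), producing intermediate values d_1,…,d_n. Then the (k,k) entry of (B·Bᵀ)^{-1} equals 1/d_k. -/

import Mathlib

open Matrix

/-- The `n×n` upper bidiagonal matrix with diagonal `a` and superdiagonal `b`. -/
def upperBidiagonal (n : ℕ) (a b : ℕ → ℝ) : Matrix (Fin n) (Fin n) ℝ :=
  Matrix.of fun i j => if (j : ℕ) = (i : ℕ) then a i
    else if (j : ℕ) = (i : ℕ) + 1 then b i else 0

/-- nat-indexed entries of the inverse of an upper bidiagonal matrix. -/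
noncomputable def gN (a b : ℕ → ℝ) (k l : ℕ) : ℝ :=
  if l ≤ k then (-1) ^ (k - l) * (∏ m ∈ Finset.Ico l k, b m) / ∏ m ∈ Finset.Icc l k, a m
  else 0

/-- The inverse of an upper bidiagonal matrix. -/
noncomputable def invB (n : ℕ) (a b : ℕ → ℝ) : Matrix (Fin n) (Fin n) ℝ :=
  Matrix.of fun i j => gN a b (j : ℕ) (i : ℕ)

lemma gN_self (a b : ℕ → ℝ) (k : ℕ) : gN a b k k = (a k)⁻¹ := by
  rw [gN, if_pos le_rfl]
  simp

lemma gN_gt (a b : ℕ → ℝ) {k l : ℕ} (h : k < l) : gN a b k l = 0 := by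
  simp [gN, Nat.not_le.mpr h]

lemma gN_step (a b : ℕ → ℝ) {k l : ℕ} (h : l < k) (hal : a l ≠ 0)
    (hQ : (∏ m ∈ Finset.Icc (l + 1) k, a m) ≠ 0) :
    a l * gN a b k l + b l * gN a b k (l + 1) = 0 := by
  have h1 : l ≤ k := h.le
  have h2 : l + 1 ≤ k := h
  have hIco : (∏ m ∈ Finset.Ico l k, b m) = b l * ∏ m ∈ Finset.Ico (l + 1) k, b m :=
    Finset.prod_eq_prod_Ico_succ_bot h b
  have hIcc : (∏ m ∈ Finset.Icc l k, a m) = a l * ∏ m ∈ Finset.Icc (l + 1) k, a m := by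
    rw [← Finset.Ico_add_one_right_eq_Icc, Finset.prod_eq_prod_Ico_succ_bot (by omega) a,
      Finset.Ico_add_one_right_eq_Icc]
  have hpow : ((-1 : ℝ)) ^ (k - l) = -(-1 : ℝ) ^ (k - (l + 1)) := by
    have : k - l = (k - (l + 1)) + 1 := by omega
    rw [this, pow_succ]
    ring
  rw [gN, gN, if_pos h1, if_pos h2, hIco, hIcc, hpow]
  field_simp
  ring

lemma gN_sq (a b : ℕ → ℝ) (k l : ℕ) :
    gN a b k l ^ 2 = if l ≤ k then
      (∏ m ∈ Finset.Ico l k, (b m) ^ 2) / ∏ m ∈ Finset.Icc l k, (a m) ^ 2 else 0 := by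
  rw [gN]
  split_ifs with h
  · rw [div_pow, mul_pow, ← pow_mul, mul_comm (k - l) 2, pow_mul, neg_one_sq, one_pow,
      one_mul, ← Finset.prod_pow, ← Finset.prod_pow]
  · simp

lemma sum_two {n i : ℕ} (hi : i < n) (c c' : ℝ) (g : ℕ → ℝ) :
    ∑ l ∈ Finset.range n, (if l = i then c else if l = i + 1 then c' else 0) * g l
      = c * g i + (if i + 1 < n then c' * g (i + 1) else 0) := by
  have key : ∀ l, (if l = i then c else if l = i + 1 then c' else 0) * g l
      = (if l = i then c * g l else 0) + (if l = i + 1 then c' * g l else 0) := by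
    intro l
    by_cases h1 : l = i
    · have : ¬ l = i + 1 := by omega
      simp [h1, this]
    · by_cases h2 : l = i + 1 <;> simp [h1, h2]
  rw [Finset.sum_congr rfl fun l _ => key l, Finset.sum_add_distrib,
    Finset.sum_ite_eq' (Finset.range n) i, Finset.sum_ite_eq' (Finset.range n) (i + 1)]
  simp [Finset.mem_range, hi]

lemma upperBidiagonal_mul_invB (n : ℕ) (a b : ℕ → ℝ) (ha : ∀ k < n, 0 < a k) :
    upperBidiagonal n a b * invB n a b = 1 := by
  ext i j
  rw [Matrix.mul_apply]
  have : ∀ l : Fin n, upperBidiagonal n a b i l * invB n a b l j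
      = (fun l : ℕ => (if l = (i : ℕ) then a i else if l = (i : ℕ) + 1 then b i else 0)
          * gN a b (j : ℕ) l) (l : ℕ) := by
    intro l
    simp only [upperBidiagonal, invB, Matrix.of_apply]
  have hsum : ∑ l : Fin n, upperBidiagonal n a b i l * invB n a b l j
      = ∑ l ∈ Finset.range n,
        (if l = (i : ℕ) then a i else if l = (i : ℕ) + 1 then b i else 0) * gN a b (j : ℕ) l := by
    rw [← Fin.sum_univ_eq_sum_range
      (fun l => (if l = (i : ℕ) then a i else if l = (i : ℕ) + 1 then b i else 0)
        * gN a b (j : ℕ) l) n]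
    exact Finset.sum_congr rfl fun l _ => this l
  rw [hsum, sum_two i.isLt]
  rcases lt_trichotomy (i : ℕ) (j : ℕ) with h | h | h
  · -- i < j : cancellation
    have hij : (i : ℕ) + 1 < n := by omega
    have hne : (i : ℕ) ≠ (j : ℕ) := h.ne
    rw [if_pos hij]
    have hQ : (∏ m ∈ Finset.Icc ((i : ℕ) + 1) (j : ℕ), a m) ≠ 0 := by
      apply Finset.prod_ne_zero_iff.mpr
      intro m hm
      simp only [Finset.mem_Icc] at hm
      exact (ha m (by omega)).ne'
    have := gN_step a b h (ha i i.isLt).ne' hQ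
    rw [Matrix.one_apply_ne (by exact fun hc => hne (by rw [hc]))]
    exact this
  · -- i = j
    have hij : i = j := Fin.ext h
    subst hij
    rw [gN_self, gN_gt a b (by omega), Matrix.one_apply_eq]
    have := (ha i i.isLt).ne'
    field_simp
    simp
  · -- i > j : all zero
    have hne : i ≠ j := by
      intro hc; subst hc; omega
    rw [gN_gt a b h, gN_gt a b (by omega), Matrix.one_apply_ne hne]
    simp

lemma key_sum (n : ℕ) (a b d : ℕ → ℝ)
    (ha : ∀ k < n, 0 < a k) (hb : ∀ k, k + 1 < n → 0 < b k)
    (hd1 : d 0 = (a 0) ^ 2)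
    (hdk : ∀ k, k + 1 < n → d (k + 1) = d k * (a (k + 1)) ^ 2 / (d k + (b k) ^ 2)) :
    ∀ k, k < n → 0 < d k ∧
      (∑ l ∈ Finset.range (k + 1),
        (∏ m ∈ Finset.Ico l k, (b m) ^ 2) / ∏ m ∈ Finset.Icc l k, (a m) ^ 2) = (d k)⁻¹ := by
  intro k
  induction k with
  | zero =>
    intro h0
    constructor
    · rw [hd1]; exact pow_pos (ha 0 h0) 2
    · simp [hd1]
  | succ k ih =>
    intro hk1
    have hk : k < n := by omega
    obtain ⟨hdpos, hsum⟩ := ih hk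
    have ha1 : 0 < a (k + 1) := ha (k + 1) hk1
    have hbk := hb k hk1
    have hdk' := hdk k hk1
    have hden : 0 < d k + (b k) ^ 2 := add_pos_of_pos_of_nonneg hdpos (sq_nonneg _)
    have hdpos' : 0 < d (k + 1) := by
      rw [hdk']
      exact div_pos (mul_pos hdpos (pow_pos ha1 2)) hden
    refine ⟨hdpos', ?_⟩
    rw [Finset.sum_range_succ]
    have hlast : (∏ m ∈ Finset.Ico (k + 1) (k + 1), (b m) ^ 2) /
        ∏ m ∈ Finset.Icc (k + 1) (k + 1), (a m) ^ 2 = 1 / (a (k + 1)) ^ 2 := by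
      simp
    have hterm : ∀ l ∈ Finset.range (k + 1),
        (∏ m ∈ Finset.Ico l (k + 1), (b m) ^ 2) / ∏ m ∈ Finset.Icc l (k + 1), (a m) ^ 2
        = ((∏ m ∈ Finset.Ico l k, (b m) ^ 2) / ∏ m ∈ Finset.Icc l k, (a m) ^ 2)
          * ((b k) ^ 2 / (a (k + 1)) ^ 2) := by
      intro l hl
      simp only [Finset.mem_range] at hl
      rw [Finset.prod_Ico_succ_top (by omega) (fun m => (b m) ^ 2),
        Finset.prod_Icc_succ_top (by omega) (fun m => (a m) ^ 2),
        div_mul_div_comm]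
    rw [Finset.sum_congr rfl hterm, ← Finset.sum_mul, hsum, hlast, hdk']
    have h1 : d k ≠ 0 := hdpos.ne'
    have h2 : a (k + 1) ≠ 0 := ha1.ne'
    have h3 : d k + (b k) ^ 2 ≠ 0 := hden.ne' 
    field_simp
    ring

/-- The intermediate quantities of the dqd transform are the reciprocals of the
diagonal entries of `(B*Bᵀ)⁻¹`. -/
theorem dqd_d_inverse_diag (n : ℕ) (hn : 0 < n) (a b d : ℕ → ℝ)
    (ha : ∀ k < n, 0 < a k) (hb : ∀ k, k + 1 < n → 0 < b k)
    (hd1 : d 0 = (a 0) ^ 2)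
    (hdk : ∀ k, k + 1 < n → d (k + 1) = d k * (a (k + 1)) ^ 2 / (d k + (b k) ^ 2)) :
    ∀ k : Fin n,
      ((upperBidiagonal n a b * (upperBidiagonal n a b)ᵀ)⁻¹) k k = (d (k : ℕ))⁻¹ := by
  intro k
  set B := upperBidiagonal n a b with hB
  have hBN : B * invB n a b = 1 := upperBidiagonal_mul_invB n a b ha
  have hBinv : B⁻¹ = invB n a b := Matrix.inv_eq_right_inv hBN
  have hM : (B * Bᵀ)⁻¹ = (invB n a b)ᵀ * invB n a b := by
    rw [Matrix.mul_inv_rev, ← Matrix.transpose_nonsing_inv, hBinv]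
  rw [hM, Matrix.mul_apply]
  have hsq : ∀ l : Fin n, (invB n a b)ᵀ k l * invB n a b l k
      = (fun l : ℕ => if l ≤ (k : ℕ) then
          (∏ m ∈ Finset.Ico l (k : ℕ), (b m) ^ 2) /
            ∏ m ∈ Finset.Icc l (k : ℕ), (a m) ^ 2 else 0) (l : ℕ) := by
    intro l
    simp only [Matrix.transpose_apply, invB, Matrix.of_apply]
    rw [← sq, gN_sq]
  have hsum2 : ∑ l : Fin n, (invB n a b)ᵀ k l * invB n a b l k
      = ∑ l ∈ Finset.range n, (if l ≤ (k : ℕ) then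
          (∏ m ∈ Finset.Ico l (k : ℕ), (b m) ^ 2) /
            ∏ m ∈ Finset.Icc l (k : ℕ), (a m) ^ 2 else 0) := by
    rw [← Fin.sum_univ_eq_sum_range (fun l => if l ≤ (k : ℕ) then
          (∏ m ∈ Finset.Ico l (k : ℕ), (b m) ^ 2) /
            ∏ m ∈ Finset.Icc l (k : ℕ), (a m) ^ 2 else 0) n]
    exact Finset.sum_congr rfl fun l _ => hsq l
  rw [hsum2]
  have hrestrict : ∑ l ∈ Finset.range n, (if l ≤ (k : ℕ) then
      (∏ m ∈ Finset.Ico l (k : ℕ), (b m) ^ 2) /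
        ∏ m ∈ Finset.Icc l (k : ℕ), (a m) ^ 2 else 0)
      = ∑ l ∈ Finset.range ((k : ℕ) + 1),
        (∏ m ∈ Finset.Ico l (k : ℕ), (b m) ^ 2) /
          ∏ m ∈ Finset.Icc l (k : ℕ), (a m) ^ 2 := by
    rw [← Finset.sum_subset (Finset.range_subset_range.mpr (by omega : (k : ℕ) + 1 ≤ n))]
    · apply Finset.sum_congr rfl
      intro l hl
      simp only [Finset.mem_range] at hl
      rw [if_pos (by omega)]
    · intro l _ hl
      simp only [Finset.mem_range] at hl
      rw [if_neg (by omega)]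
  rw [hrestrict]
  exact (key_sum n a b d ha hb hd1 hdk (k : ℕ) k.isLt).2
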